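/- For all positive integers ℓ, m, n and any commutative semiring K, the stride permutation matrices satisfy the recursive identity P_n^{ℓmn} = (P_n^{ℓn} ⊗ I_m) · (I_ℓ ⊗ P_n^{mn}), where ⊗ denotes the Kronecker product and I_k the k×k identity matrix. -/

import Mathlib

open Matrix

/-- The `mn`-point stride-`n` permutation, as a permutation of `Fin N` (where `N = m * n`):
it sends the index of `e_i^m ⊗ e_j^n` (i.e. `n*i + j`, zero-based) to the index of
`e_j^n ⊗ e_i^m` (i.e. `m*j + i`). -/
def strideEquiv (N m n : ℕ) (h : N = m * n) : Fin N ≃ Fin N :=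
  (finCongr h).trans <|
    finProdFinEquiv.symm.trans <|
      (Equiv.prodComm (Fin m) (Fin n)).trans <|
        finProdFinEquiv.trans (finCongr (by rw [h]; exact Nat.mul_comm n m))

/-- The `mn`-point stride-`n` permutation matrix `P_n^{mn}`: the `N × N` permutation matrix
(`N = m * n`) determined by `P_n^{mn} · (e_i^m ⊗ e_j^n) = e_j^n ⊗ e_i^m`. -/
def strideMat (K : Type*) [Semiring K] (N m n : ℕ) (h : N = m * n) :
    Matrix (Fin N) (Fin N) K :=
  Matrix.of fun a b => if a = strideEquiv N m n h b then 1 else 0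

/-- Kronecker (tensor) product of matrices, with row-major indexing by `Fin`:
the `(n*i + s, q*j + t)` entry of `kron A B` is `A i j * B s t`. -/
def kron {K : Type*} [Mul K] {m n p q : ℕ}
    (A : Matrix (Fin m) (Fin n) K) (B : Matrix (Fin p) (Fin q) K) :
    Matrix (Fin (m * p)) (Fin (n * q)) K :=
  Matrix.reindex finProdFinEquiv finProdFinEquiv (Matrix.kroneckerMap (· * ·) A B)

/-- Cast a matrix along equalities of its dimensions. -/
def mcast {K : Type*} {a b c d : ℕ} (h₁ : a = b) (h₂ : c = d)
    (A : Matrix (Fin a) (Fin c) K) : Matrix (Fin b) (Fin d) K :=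
  Matrix.reindex (finCongr h₁) (finCongr h₂) A


def permMat (K : Type*) [Semiring K] {N : ℕ} (e : Fin N ≃ Fin N) :
    Matrix (Fin N) (Fin N) K :=
  Matrix.of fun a b => if a = e b then 1 else 0

lemma strideMat_eq (K : Type*) [Semiring K] (N m n : ℕ) (h : N = m * n) :
    strideMat K N m n h = permMat K (strideEquiv N m n h) := rfl

lemma permMat_mul (K : Type*) [Semiring K] {N : ℕ} (e₁ e₂ : Fin N ≃ Fin N) :
    permMat K e₁ * permMat K e₂ = permMat K (e₂.trans e₁) := by
  ext a b
  simp only [permMat, Matrix.mul_apply, Matrix.of_apply, Equiv.trans_apply]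
  rw [Finset.sum_eq_single (e₂ b)]
  · simp; split_ifs <;> simp_all
  · intro c _ hc; simp [hc]
  · simp

lemma kron_permMat_one (K : Type*) [CommSemiring K] {N m : ℕ} (e : Fin N ≃ Fin N) :
    kron (permMat K e) (1 : Matrix (Fin m) (Fin m) K) =
      permMat K (finProdFinEquiv.symm.trans
        ((e.prodCongr (Equiv.refl (Fin m))).trans finProdFinEquiv)) := by
  ext a b
  simp only [kron, permMat, Matrix.reindex_apply, Matrix.submatrix_apply,
    Matrix.kroneckerMap_apply, Matrix.of_apply, Matrix.one_apply, Equiv.trans_apply,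
    Equiv.prodCongr_apply, Prod.map, Equiv.refl_apply]
  simp only [← Equiv.symm_apply_eq, Prod.ext_iff]
  split_ifs <;> simp_all

lemma kron_one_permMat (K : Type*) [CommSemiring K] {N ℓ : ℕ} (e : Fin N ≃ Fin N) :
    kron (1 : Matrix (Fin ℓ) (Fin ℓ) K) (permMat K e) =
      permMat K (finProdFinEquiv.symm.trans
        (((Equiv.refl (Fin ℓ)).prodCongr e).trans finProdFinEquiv)) := by
  ext a b
  simp only [kron, permMat, Matrix.reindex_apply, Matrix.submatrix_apply,
    Matrix.kroneckerMap_apply, Matrix.of_apply, Matrix.one_apply, Equiv.trans_apply,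
    Equiv.prodCongr_apply, Prod.map, Equiv.refl_apply]
  simp only [← Equiv.symm_apply_eq, Prod.ext_iff]
  split_ifs <;> simp_all

lemma mcast_permMat (K : Type*) [Semiring K] {a b : ℕ} (h : a = b) (e : Fin a ≃ Fin a) :
    mcast h h (permMat K e) =
      permMat K ((finCongr h).symm.trans (e.trans (finCongr h))) := by
  subst h
  ext x y
  simp [mcast, permMat]

lemma strideEquiv_val (N m n : ℕ) (h : N = m * n) (b : Fin N) :
    ((strideEquiv N m n h) b : ℕ) = (b : ℕ) / n + m * ((b : ℕ) % n) := by
  subst h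
  simp [strideEquiv, finProdFinEquiv]

lemma natkey (ℓ m n x : ℕ) (hm : 0 < m) (hn : 0 < n) :
    x / n + ℓ * m * (x % n) =
      (x % (m * n) / n + m * (x % (m * n) % n) + m * n * (x / (m * n))) % m +
        m * ((x % (m * n) / n + m * (x % (m * n) % n) + m * n * (x / (m * n))) / m / n +
          ℓ * ((x % (m * n) / n + m * (x % (m * n) % n) + m * n * (x / (m * n))) / m % n)) := by
  set a := x / (m * n) with ha
  set r := x % (m * n) with hr
  set p := r / n with hp
  set q := r % n with hq
  have hqn : q < n := Nat.mod_lt _ hn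
  have hpm : p < m := by
    rw [hp]
    exact (Nat.div_lt_iff_lt_mul hn).mpr (Nat.mod_lt _ (Nat.mul_pos hm hn))
  have hxe : x = q + n * (p + m * a) := by
    have h1 : x = m * n * a + r := (Nat.div_add_mod x (m * n)).symm
    have h2 : r = n * p + q := (Nat.div_add_mod r n).symm
    rw [h1, h2]; ring
  have h3 : x % n = q := by rw [hxe, Nat.add_mul_mod_self_left, Nat.mod_eq_of_lt hqn]
  have h2 : x / n = p + m * a := by
    rw [hxe, Nat.add_mul_div_left _ _ hn, Nat.div_eq_of_lt hqn, zero_add]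
  have hc : p + m * q + m * n * a = p + m * (q + n * a) := by ring
  rw [h2, h3, hc, Nat.add_mul_mod_self_left, Nat.mod_eq_of_lt hpm,
    Nat.add_mul_div_left _ _ hm, Nat.div_eq_of_lt hpm, zero_add,
    Nat.add_mul_div_left _ _ hn, Nat.div_eq_of_lt hqn, zero_add,
    Nat.add_mul_mod_self_left, Nat.mod_eq_of_lt hqn]
  ring

lemma fpf_val {m n : ℕ} (x : Fin m × Fin n) :
    ((finProdFinEquiv x : Fin (m * n)) : ℕ) = (x.2 : ℕ) + n * (x.1 : ℕ) := rfl
lemma fpf_symm_fst {m n : ℕ} (x : Fin (m * n)) :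
    (((finProdFinEquiv.symm x : Fin m × Fin n)).1 : ℕ) = (x : ℕ) / n := rfl
lemma fpf_symm_snd {m n : ℕ} (x : Fin (m * n)) :
    (((finProdFinEquiv.symm x : Fin m × Fin n)).2 : ℕ) = (x : ℕ) % n := rfl

/-- For all positive integers `ℓ, m, n` and any commutative semiring `K`,
`P_n^{ℓmn} = (P_n^{ℓn} ⊗ I_m) · (I_ℓ ⊗ P_n^{mn})`. -/
theorem stride_recursive (K : Type*) [CommSemiring K] (ℓ m n : ℕ)
    (hℓ : 0 < ℓ) (hm : 0 < m) (hn : 0 < n) :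
    strideMat K (ℓ * m * n) (ℓ * m) n (by ring) =
      mcast (show ℓ * n * m = ℓ * m * n by ring) (show ℓ * n * m = ℓ * m * n by ring)
          (kron (strideMat K (ℓ * n) ℓ n rfl) (1 : Matrix (Fin m) (Fin m) K)) *
        mcast (show ℓ * (m * n) = ℓ * m * n by ring) (show ℓ * (m * n) = ℓ * m * n by ring)
          (kron (1 : Matrix (Fin ℓ) (Fin ℓ) K) (strideMat K (m * n) m n rfl)) := by
  rw [strideMat_eq, strideMat_eq, strideMat_eq, kron_permMat_one, kron_one_permMat,
      mcast_permMat, mcast_permMat, permMat_mul]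
  refine congrArg (permMat K) (Equiv.ext fun b => Fin.ext ?_)
  simp only [Equiv.trans_apply, Equiv.symm_trans_apply, finCongr_symm, finCongr_apply,
    Equiv.prodCongr_apply, Prod.map, Equiv.refl_apply, Fin.coe_cast, strideEquiv_val,
    Equiv.toFun_as_coe, fpf_val, fpf_symm_fst, fpf_symm_snd]
  exact natkey ℓ m n (b : ℕ) hm hn
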